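/- Let F be the free group on x_1,...,x_{n+1}, F^{(k)} = ker(g_k) where g_k sends each generator to 1 ∈ Z/k, and let N be the normal closure in F^{(k)} of the elements x_i^k, 1 ≤ i ≤ n+1. Then the quotient F^{(k)}/N is a free group of rank n(k-1), freely generated by the images of τ^j(y_i) for 1 ≤ i ≤ n and 0 ≤ j ≤ k-2, where τ(w)=x_{n+1}wx_{n+1}^{-1} and y_i = x_i x_{n+1}^{-1}. -/

import Mathlib

def gk (n k : ℕ) : FreeGroup (Fin (n + 1)) →* Multiplicative (ZMod k) :=
  FreeGroup.lift fun _ => Multiplicative.ofAdd (1 : ZMod k)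

def xlast (n : ℕ) : FreeGroup (Fin (n + 1)) := FreeGroup.of (Fin.last n)

def tau (n : ℕ) (w : FreeGroup (Fin (n + 1))) : FreeGroup (Fin (n + 1)) :=
  xlast n * w * (xlast n)⁻¹

def yy (n : ℕ) (i : Fin n) : FreeGroup (Fin (n + 1)) :=
  FreeGroup.of i.castSucc * (xlast n)⁻¹

/-- The normal closure, inside `ker g_k`, of the elements `x_i^k`, `1 ≤ i ≤ n+1`. -/
def NN (n k : ℕ) : Subgroup (MonoidHom.ker (gk n k)) :=
  Subgroup.normalClosure
    {w : MonoidHom.ker (gk n k) | ∃ i : Fin (n + 1), (w : FreeGroup (Fin (n + 1))) = FreeGroup.of i ^ k}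

instance (n k : ℕ) : (NN n k).Normal := Subgroup.normalClosure_normal

namespace QF

variable (n k : ℕ)

abbrev Hgp := FreeGroup (Fin n × Fin (k - 1))
abbrev Kgp := MonoidHom.ker (gk n k)

/-- shift automorphisms of the pi group -/
def shiftHom : Multiplicative (ZMod k) →* MulAut (ZMod k → Hgp n k) where
  toFun a :=
    { toFun := fun f x => f (x + Multiplicative.toAdd a)
      invFun := fun f x => f (x - Multiplicative.toAdd a)
      left_inv := fun f => funext fun x => by simp
      right_inv := fun f => funext fun x => by simp
      map_mul' := fun f g => rfl }
  map_one' := by ext f x; simp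
  map_mul' a b := by ext f x; simp [add_assoc]

abbrev Wgp := SemidirectProduct (ZMod k → Hgp n k) (Multiplicative (ZMod k)) (shiftHom n k)

@[simp] lemma shift_apply (a : Multiplicative (ZMod k)) (f : ZMod k → Hgp n k) (x : ZMod k) :
    shiftHom n k a f x = f (x + Multiplicative.toAdd a) := rfl

def ee (i : Fin n) (t : ℕ) : Hgp n k :=
  if h : t < k - 1 then FreeGroup.of (i, ⟨t, h⟩) else 1

def PP (i : Fin n) : Hgp n k := ((List.range (k - 1)).map (ee n k i)).prod

def fv (i : Fin n) : ZMod k → Hgp n k := fun x =>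
  if x.val < k - 1 then ee n k i x.val else (PP n k i)⁻¹

def gen : Fin (n + 1) → Wgp n k := fun m =>
  ⟨Fin.lastCases 1 (fv n k) m, Multiplicative.ofAdd 1⟩

def rho : FreeGroup (Fin (n + 1)) →* Wgp n k := FreeGroup.lift (gen n k)

@[simp] lemma rho_of (m : Fin (n + 1)) : rho n k (FreeGroup.of m) = gen n k m :=
  FreeGroup.lift_apply_of

lemma rho_right (w : FreeGroup (Fin (n + 1))) :
    (rho n k w).right = gk n k w := by
  have h : (SemidirectProduct.rightHom (φ := shiftHom n k)).comp (rho n k) = gk n k :=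
    FreeGroup.ext_hom _ _ fun m => by
      simp [gk, gen, SemidirectProduct.rightHom]
  exact DFunLike.congr_fun h w

@[simp] lemma gk_xlast : gk n k (xlast n) = Multiplicative.ofAdd (1 : ZMod k) :=
  FreeGroup.lift_apply_of

lemma gk_xlast_pow (a : ℕ) :
    gk n k (xlast n ^ a) = Multiplicative.ofAdd (a : ZMod k) := by
  rw [map_pow, gk_xlast, ← ofAdd_nsmul]
  simp

/-- iterated tau -/
lemma tau_iter (a : ℕ) (w : FreeGroup (Fin (n + 1))) :
    (tau n)^[a] w = xlast n ^ a * w * (xlast n ^ a)⁻¹ := by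
  induction a with
  | zero => simp
  | succ a ih =>
    rw [Function.iterate_succ_apply', ih, tau]
    group

def uu (i : Fin n) (t : ℕ) : FreeGroup (Fin (n + 1)) := (tau n)^[t] (yy n i)

lemma uu_eq (i : Fin n) (t : ℕ) :
    uu n i t = xlast n ^ t * (FreeGroup.of i.castSucc * (xlast n)⁻¹) * (xlast n ^ t)⁻¹ :=
  tau_iter n t _

lemma uu_mem (i : Fin n) (t : ℕ) : uu n i t ∈ MonoidHom.ker (gk n k) := by
  rw [MonoidHom.mem_ker, uu_eq, map_mul, map_mul, map_mul, map_inv, map_inv]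
  have h1 : gk n k (FreeGroup.of i.castSucc) = Multiplicative.ofAdd (1 : ZMod k) :=
    FreeGroup.lift_apply_of
  rw [h1, gk_xlast]
  group

def phi : Hgp n k →* (Kgp n k ⧸ NN n k) :=
  FreeGroup.lift fun p => QuotientGroup.mk ⟨uu n p.1 p.2, uu_mem n k p.1 p.2⟩

@[simp] lemma phi_of (p : Fin n × Fin (k - 1)) :
    phi n k (FreeGroup.of p) = QuotientGroup.mk ⟨uu n p.1 p.2, uu_mem n k p.1 p.2⟩ :=
  FreeGroup.lift_apply_of

end QF

namespace QF
variable (n k : ℕ)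

section NZ
variable [NeZero k]

lemma val_cast (a : ZMod k) : ((a.val : ℕ) : ZMod k) = a := by
  simp [ZMod.natCast_val, ZMod.cast_id]

lemma val_add_one_lt (j : ZMod k) (h : j.val < k - 1) : (j + 1).val = j.val + 1 := by
  have h0 : 0 < k := Nat.pos_of_ne_zero (NeZero.ne k)
  have e : j + 1 = ((j.val + 1 : ℕ) : ZMod k) := by
    push_cast [ZMod.natCast_val, ZMod.cast_id]; rfl
  rw [e, ZMod.val_cast_of_lt (by omega)]

lemma val_add_one_top (j : ZMod k) (h : j.val = k - 1) : (j + 1).val = 0 := by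
  have h0 : 0 < k := Nat.pos_of_ne_zero (NeZero.ne k)
  have e : j + 1 = ((j.val + 1 : ℕ) : ZMod k) := by
    push_cast [ZMod.natCast_val, ZMod.cast_id]; rfl
  rw [e, h, show (k - 1 + 1 : ℕ) = k by omega, ZMod.natCast_self, ZMod.val_zero]

end NZ

lemma ym_mem (i : Fin n) (m : ℕ) :
    FreeGroup.of i.castSucc ^ m * (xlast n ^ m)⁻¹ ∈ Kgp n k := by
  rw [MonoidHom.mem_ker, map_mul, map_inv, map_pow, gk_xlast_pow]
  have h1 : gk n k (FreeGroup.of i.castSucc) = Multiplicative.ofAdd (1 : ZMod k) :=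
    FreeGroup.lift_apply_of
  rw [h1, ← ofAdd_nsmul]
  simp

lemma phi_prod (i : Fin n) :
    ∀ m : ℕ, m ≤ k - 1 →
      phi n k (((List.range m).map (ee n k i)).prod) =
        QuotientGroup.mk ⟨_, ym_mem n k i m⟩ := by
  intro m
  induction m with
  | zero =>
    intro _
    have h1 : (⟨_, ym_mem n k i 0⟩ : Kgp n k) = 1 := by
      apply Subtype.ext; simp
    rw [h1, List.range_zero, List.map_nil, List.prod_nil, map_one, QuotientGroup.mk_one]
  | succ m ih =>
    intro hm
    have hmlt : m < k - 1 := hm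
    rw [List.range_succ, List.map_append, List.prod_append, map_mul, ih (le_of_lt hmlt)]
    have hee : ee n k i m = FreeGroup.of (i, ⟨m, hmlt⟩) := dif_pos hmlt
    rw [List.map_singleton, List.prod_singleton, hee, phi_of]
    rw [← QuotientGroup.mk_mul]
    congr 1
    apply Subtype.ext
    show FreeGroup.of i.castSucc ^ m * (xlast n ^ m)⁻¹ * uu n i m = _
    rw [uu_eq]
    simp only [yy]
    group

lemma gen_pow_right (m : Fin (n + 1)) (a : ℕ) :
    ((gen n k m) ^ a).right = Multiplicative.ofAdd (a : ZMod k) := by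
  have : ((gen n k m) ^ a).right =
      (SemidirectProduct.rightHom (φ := shiftHom n k)) ((gen n k m) ^ a) := rfl
  rw [this, map_pow]
  have : (SemidirectProduct.rightHom (φ := shiftHom n k)) (gen n k m) =
      Multiplicative.ofAdd (1 : ZMod k) := rfl
  rw [this, ← ofAdd_nsmul]
  simp

lemma gen_pow_left (m : Fin (n + 1)) (a : ℕ) (x : ZMod k) :
    ((gen n k m) ^ a).left x =
      ((List.range a).map
        (fun t : ℕ => (Fin.lastCases 1 (fv n k) m : ZMod k → Hgp n k) (x + (t : ZMod k)))).prod := by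
  induction a with
  | zero => simp [SemidirectProduct.one_left]
  | succ a ih =>
    rw [pow_succ, SemidirectProduct.mul_left]
    show ((gen n k m) ^ a).left x *
      (shiftHom n k ((gen n k m)^a).right ((gen n k m).left)) x = _
    rw [gen_pow_right, shift_apply, ih]
    rw [List.range_succ, List.map_append, List.prod_append, List.map_singleton,
      List.prod_singleton]
    rfl

def psi : Kgp n k →* Hgp n k where
  toFun w := (rho n k (w : FreeGroup (Fin (n + 1)))).left 0
  map_one' := by
    show (rho n k 1).left 0 = 1
    rw [map_one, SemidirectProduct.one_left]
    rfl
  map_mul' w1 w2 := by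
    show (rho n k (↑w1 * ↑w2)).left 0 = _
    rw [map_mul, SemidirectProduct.mul_left]
    show _ * (shiftHom n k ((rho n k ↑w1).right) ((rho n k ↑w2).left)) 0 = _
    rw [rho_right, MonoidHom.mem_ker.mp w1.2, shift_apply]
    norm_num

lemma NN_le_ker [NeZero k] : NN n k ≤ (psi n k).ker := by
  apply Subgroup.normalClosure_le_normal
  rintro w ⟨i, hw⟩
  rw [SetLike.mem_coe, MonoidHom.mem_ker]
  show (rho n k (w : FreeGroup (Fin (n + 1)))).left 0 = 1
  rw [hw, map_pow, rho_of, gen_pow_left]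
  induction i using Fin.lastCases with
  | last =>
    rw [Fin.lastCases_last]
    apply List.prod_eq_one
    intro a ha
    simp only [List.mem_map] at ha
    obtain ⟨t, _, rfl⟩ := ha
    rfl
  | cast i =>
    rw [Fin.lastCases_castSucc]
    have h0 : 0 < k := Nat.pos_of_ne_zero (NeZero.ne k)
    have hk1 : List.range k = List.range (k - 1) ++ [k - 1] := by
      conv_lhs => rw [show k = (k - 1) + 1 from by omega]
      rw [List.range_succ]
    rw [hk1, List.map_append, List.prod_append, List.map_singleton,
      List.prod_singleton]
    have hfst : ((List.range (k - 1)).map (fun t : ℕ => fv n k i (0 + (t : ZMod k)))).prod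
        = PP n k i := by
      unfold PP
      congr 1
      apply List.map_congr_left
      intro t ht
      rw [List.mem_range] at ht
      have hval : ((t : ZMod k)).val = t := ZMod.val_cast_of_lt (by omega)
      show fv n k i (0 + (t : ZMod k)) = ee n k i t
      rw [zero_add, fv, hval, if_pos ht]
    rw [hfst]
    have hval : (((k - 1 : ℕ) : ZMod k)).val = k - 1 := ZMod.val_cast_of_lt (by omega)
    show PP n k i * fv n k i (0 + ((k - 1 : ℕ) : ZMod k)) = 1
    rw [zero_add, fv, hval, if_neg (lt_irrefl _), mul_inv_cancel]

end QF

namespace QF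
variable (n k : ℕ) [NeZero k]

def cc (w : FreeGroup (Fin (n + 1))) : ZMod k := Multiplicative.toAdd (gk n k w)

lemma cc_of (m : Fin (n + 1)) : cc n k (FreeGroup.of m) = 1 := by
  simp [cc, gk]

lemma cc_mul (w1 w2 : FreeGroup (Fin (n + 1))) :
    cc n k (w1 * w2) = cc n k w1 + cc n k w2 := by
  simp [cc, map_mul]

lemma cc_inv (w : FreeGroup (Fin (n + 1))) : cc n k w⁻¹ = -(cc n k w) := by
  simp [cc, map_inv]

lemma E_mem (w : FreeGroup (Fin (n + 1))) (j : ZMod k) :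
    xlast n ^ j.val * w * (xlast n ^ ((j + cc n k w).val))⁻¹ ∈ Kgp n k := by
  rw [MonoidHom.mem_ker, map_mul, map_mul, map_inv, gk_xlast_pow, gk_xlast_pow,
    val_cast, val_cast]
  have h : gk n k w = Multiplicative.ofAdd (cc n k w) := rfl
  rw [h, ← ofAdd_add, mul_inv_eq_one]

def EE (w : FreeGroup (Fin (n + 1))) (j : ZMod k) : Kgp n k :=
  ⟨_, E_mem n k w j⟩

lemma main_gen (m : Fin (n + 1)) (j : ZMod k) :
    phi n k ((rho n k (FreeGroup.of m)).left j) =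
      QuotientGroup.mk (EE n k (FreeGroup.of m) j) := by
  have h0 : 0 < k := Nat.pos_of_ne_zero (NeZero.ne k)
  have hup : (j + cc n k (FreeGroup.of m)).val = (j + 1).val := by rw [cc_of]
  rw [rho_of]
  induction m using Fin.lastCases with
  | last =>
    show phi n k ((Fin.lastCases 1 (fv n k) (Fin.last n) : ZMod k → Hgp n k) j) = _
    rw [Fin.lastCases_last]
    show phi n k 1 = _
    rw [map_one]
    rcases lt_or_eq_of_le (Nat.lt_succ_iff.mp (by
        have := ZMod.val_lt j; omega : j.val < (k - 1) + 1)) with hlt | heq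
    · have hE : EE n k (FreeGroup.of (Fin.last n)) j = 1 := by
        apply Subtype.ext
        show xlast n ^ j.val * FreeGroup.of (Fin.last n) *
          (xlast n ^ ((j + cc n k (FreeGroup.of (Fin.last n))).val))⁻¹ = 1
        rw [hup, val_add_one_lt k j hlt]
        show xlast n ^ j.val * xlast n * (xlast n ^ (j.val + 1))⁻¹ = 1
        rw [pow_succ]
        group
      rw [hE, QuotientGroup.mk_one]
    · symm
      rw [QuotientGroup.eq_one_iff]
      apply Subgroup.subset_normalClosure
      refine ⟨Fin.last n, ?_⟩
      show xlast n ^ j.val * FreeGroup.of (Fin.last n) *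
        (xlast n ^ ((j + cc n k (FreeGroup.of (Fin.last n))).val))⁻¹ = _
      rw [hup, val_add_one_top k j heq, heq, pow_zero, inv_one, mul_one]
      show xlast n ^ (k - 1) * xlast n = FreeGroup.of (Fin.last n) ^ k
      rw [← pow_succ, Nat.sub_add_cancel h0]
      rfl
  | cast i =>
    show phi n k ((Fin.lastCases 1 (fv n k) i.castSucc : ZMod k → Hgp n k) j) = _
    rw [Fin.lastCases_castSucc]
    rcases lt_or_eq_of_le (Nat.lt_succ_iff.mp (by
        have := ZMod.val_lt j; omega : j.val < (k - 1) + 1)) with hlt | heq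
    · show phi n k (if j.val < k - 1 then ee n k i j.val else (PP n k i)⁻¹) = _
      rw [if_pos hlt]
      have hee : ee n k i j.val = FreeGroup.of (i, ⟨j.val, hlt⟩) := dif_pos hlt
      rw [hee, phi_of]
      congr 1
      apply Subtype.ext
      show uu n i j.val = xlast n ^ j.val * FreeGroup.of i.castSucc *
        (xlast n ^ ((j + cc n k (FreeGroup.of i.castSucc)).val))⁻¹
      rw [hup, val_add_one_lt k j hlt, uu_eq]
      rw [pow_succ]
      group
    · show phi n k (if j.val < k - 1 then ee n k i j.val else (PP n k i)⁻¹) = _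
      rw [if_neg (by omega), map_inv]
      unfold PP
      rw [phi_prod n k i (k - 1) le_rfl]
      rw [← QuotientGroup.mk_inv, QuotientGroup.eq]
      apply Subgroup.subset_normalClosure
      refine ⟨i.castSucc, ?_⟩
      show (FreeGroup.of i.castSucc ^ (k - 1) * (xlast n ^ (k - 1))⁻¹)⁻¹⁻¹ *
        (xlast n ^ j.val * FreeGroup.of i.castSucc *
          (xlast n ^ ((j + cc n k (FreeGroup.of i.castSucc)).val))⁻¹) =
        FreeGroup.of i.castSucc ^ k
    
      rw [hup, val_add_one_top k j heq, heq, pow_zero, inv_one, mul_one, inv_inv]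
      conv_rhs => rw [show k = (k - 1) + 1 from by omega]
      rw [pow_succ]
      group

lemma main (w : FreeGroup (Fin (n + 1))) :
    ∀ j : ZMod k, phi n k ((rho n k w).left j) = QuotientGroup.mk (EE n k w j) := by
  induction w using FreeGroup.induction_on with
  | C1 =>
    intro j
    rw [map_one, SemidirectProduct.one_left]
    show phi n k 1 = _
    rw [map_one]
    have hE : EE n k 1 j = 1 := by
      apply Subtype.ext
      show xlast n ^ j.val * 1 * (xlast n ^ ((j + cc n k 1).val))⁻¹ = 1
      rw [show cc n k 1 = 0 by simp [cc], add_zero, mul_one, mul_inv_cancel]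
    rw [hE, QuotientGroup.mk_one]
  | of m => exact main_gen n k m
  | inv_of m _ =>
    intro j
    show phi n k ((rho n k ((FreeGroup.of m)⁻¹)).left j) =
      QuotientGroup.mk (EE n k (FreeGroup.of m)⁻¹ j)
    have hl : ((gen n k m)⁻¹).left j = ((gen n k m).left (j - 1))⁻¹ := by
      rw [SemidirectProduct.inv_left, shift_apply, Pi.inv_apply]
      have harg : j + Multiplicative.toAdd ((gen n k m).right)⁻¹ = j - 1 := by
        show j + -(1 : ZMod k) = j - 1
        ring
      rw [harg]
    rw [map_inv, rho_of, hl, map_inv]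
    have := main_gen n k m (j - 1)
    rw [rho_of] at this
    rw [this, ← QuotientGroup.mk_inv]
    congr 1
    apply Subtype.ext
    show (xlast n ^ (j-1).val * FreeGroup.of m *
      (xlast n ^ (((j-1) + cc n k (FreeGroup.of m)).val))⁻¹)⁻¹ =
      xlast n ^ j.val * (FreeGroup.of m)⁻¹ *
        (xlast n ^ ((j + cc n k (FreeGroup.of m)⁻¹).val))⁻¹
    rw [cc_inv, cc_of]
    have h1 : j - 1 + 1 = j := by ring
    have h2 : j + -1 = j - 1 := by ring
    rw [h1, h2]
    group
  | mul w1 w2 ih1 ih2 =>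
    intro j
    rw [map_mul, SemidirectProduct.mul_left]
    show phi n k ((rho n k w1).left j *
      (shiftHom n k ((rho n k w1).right) ((rho n k w2).left)) j) = _
    rw [shift_apply, rho_right]
    have htoadd : Multiplicative.toAdd (gk n k w1) = cc n k w1 := rfl
    rw [htoadd, map_mul, ih1 j, ih2 (j + cc n k w1), ← QuotientGroup.mk_mul]
    congr 1
    apply Subtype.ext
    show (xlast n ^ j.val * w1 * (xlast n ^ ((j + cc n k w1).val))⁻¹) *
      (xlast n ^ ((j + cc n k w1).val) * w2 *
        (xlast n ^ (((j + cc n k w1) + cc n k w2).val))⁻¹) =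
      xlast n ^ j.val * (w1 * w2) * (xlast n ^ ((j + cc n k (w1 * w2)).val))⁻¹
    rw [cc_mul, ← add_assoc]
    group

end QF

namespace QF
variable (n k : ℕ)

lemma B_eq : gen n k (Fin.last n) = SemidirectProduct.inr (Multiplicative.ofAdd 1) := by
  ext <;> simp [gen]

lemma rho_xlast : rho n k (xlast n) = SemidirectProduct.inr (Multiplicative.ofAdd 1) := by
  rw [show xlast n = FreeGroup.of (Fin.last n) from rfl, rho_of, B_eq]

lemma conj_left (c : Multiplicative (ZMod k)) (w : Wgp n k) (x : ZMod k) :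
    ((SemidirectProduct.inr c) * w * (SemidirectProduct.inr c)⁻¹).left x =
      w.left (x + Multiplicative.toAdd c) := by
  rw [← map_inv, SemidirectProduct.mul_left, SemidirectProduct.mul_left,
    SemidirectProduct.left_inr, SemidirectProduct.left_inr, SemidirectProduct.right_inr,
    one_mul, map_one]
  show (shiftHom n k c w.left * 1) x = _
  rw [mul_one, shift_apply]

lemma rho_yy_left (i : Fin n) : (rho n k (yy n i)).left = fv n k i := by
  have h1 : rho n k (yy n i) = gen n k i.castSucc * (SemidirectProduct.inr (Multiplicative.ofAdd 1))⁻¹ := by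
    rw [yy, map_mul, map_inv, rho_of, rho_xlast]
  rw [h1, SemidirectProduct.mul_left, ← map_inv, SemidirectProduct.left_inr, map_one, mul_one]
  show (Fin.lastCases 1 (fv n k) i.castSucc : ZMod k → Hgp n k) = fv n k i
  rw [Fin.lastCases_castSucc]

lemma rho_uu_left [NeZero k] (i : Fin n) (t : ℕ) (ht : t < k - 1) :
    (rho n k (uu n i t)).left 0 = FreeGroup.of (i, ⟨t, ht⟩) := by
  have h0 : 0 < k := Nat.pos_of_ne_zero (NeZero.ne k)
  have h1 : uu n i t = xlast n ^ t * yy n i * (xlast n ^ t)⁻¹ := tau_iter n t _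
  rw [h1, map_mul, map_mul, map_inv, map_pow, rho_xlast, ← map_pow, conj_left]
  rw [rho_yy_left]
  have harg : (0 : ZMod k) + Multiplicative.toAdd (Multiplicative.ofAdd (1 : ZMod k) ^ t)
      = (t : ZMod k) := by
    rw [← ofAdd_nsmul]
    show (0 : ZMod k) + t • (1 : ZMod k) = t
    simp
  rw [harg]
  have hval : ((t : ZMod k)).val = t := ZMod.val_cast_of_lt (by omega)
  show (if ((t : ZMod k)).val < k - 1 then ee n k i ((t : ZMod k)).val else (PP n k i)⁻¹)
    = FreeGroup.of (i, ⟨t, ht⟩)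
  rw [hval, if_pos ht]
  exact dif_pos ht

def psibar [NeZero k] : (Kgp n k ⧸ NN n k) →* Hgp n k :=
  QuotientGroup.lift (NN n k) (psi n k) (NN_le_ker n k)

lemma comp_one [NeZero k] : (psibar n k).comp (phi n k) = MonoidHom.id (Hgp n k) := by
  apply FreeGroup.ext_hom
  rintro ⟨i, j⟩
  rw [MonoidHom.comp_apply, MonoidHom.id_apply, phi_of]
  show psi n k ⟨uu n i j, uu_mem n k i j⟩ = FreeGroup.of (i, j)
  show (rho n k (uu n i j)).left 0 = FreeGroup.of (i, j)
  rw [rho_uu_left n k i j.1 j.2]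

lemma comp_two [NeZero k] : (phi n k).comp (psibar n k) = MonoidHom.id _ := by
  apply QuotientGroup.monoidHom_ext
  ext x
  show phi n k (psi n k x) = QuotientGroup.mk x
  show phi n k ((rho n k (x : FreeGroup (Fin (n + 1)))).left 0) = QuotientGroup.mk x
  rw [main n k (x : FreeGroup (Fin (n + 1))) 0]
  congr 1
  apply Subtype.ext
  show xlast n ^ (0 : ZMod k).val * (x : FreeGroup (Fin (n + 1))) *
    (xlast n ^ (((0 : ZMod k) + cc n k (x : FreeGroup (Fin (n + 1)))).val))⁻¹ = x
  have hcc : cc n k (x : FreeGroup (Fin (n + 1))) = 0 := by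
    rw [cc, MonoidHom.mem_ker.mp x.2]
    rfl
  rw [hcc, add_zero, ZMod.val_zero, pow_zero, one_mul, inv_one, mul_one]

end QF


/-- `ker(g_k)/N` is free of rank `n(k-1)`, freely generated by the
images of `τ^j(y_i)`, `1 ≤ i ≤ n`, `0 ≤ j ≤ k-2`. -/
theorem quotient_free (n k : ℕ) (hk : 0 < k) :
    ∃ e : FreeGroup (Fin n × Fin (k - 1)) ≃* (MonoidHom.ker (gk n k) ⧸ NN n k),
      ∀ (i : Fin n) (j : Fin (k - 1)) (w : MonoidHom.ker (gk n k)),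
        (w : FreeGroup (Fin (n + 1))) = (tau n)^[(j : ℕ)] (yy n i) →
          e (FreeGroup.of (i, j)) = QuotientGroup.mk w := by
  haveI : NeZero k := ⟨hk.ne'⟩
  refine ⟨MonoidHom.toMulEquiv (QF.phi n k) (QF.psibar n k)
    (QF.comp_one n k) (QF.comp_two n k), ?_⟩
  intro i j w hw
  have hww : w = ⟨QF.uu n i j, QF.uu_mem n k i j⟩ := Subtype.ext (by rw [hw]; rfl)
  show QF.phi n k (FreeGroup.of (i, j)) = QuotientGroup.mk w
  rw [QF.phi_of, hww]
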